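/- For every positive integer n there exists a set S ⊆ ℤ^n with |S| = 2^(2^(n-1)) such that no three pairwise distinct points u, v, w ∈ S satisfy d₁(u,w) = d₁(u,v) + d₁(v,w). -/

import Mathlib

/-- The ℓ1 (graph) distance on the integer lattice ℤ^n. -/
def d1 {n : ℕ} (u v : Fin n → ℤ) : ℤ := ∑ i, |u i - v i|

namespace GPaux

/-- Sign pattern: coordinate 0 always +1, coordinate i (i ≥ 1) is -1 iff bit (i-1) of r. -/
def sgn {n : ℕ} (r : ℕ) (i : Fin n) : ℤ :=
  if (i : ℕ) = 0 then 1 else if Nat.testBit r ((i : ℕ) - 1) then -1 else 1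

lemma sgn_pm {n : ℕ} (r : ℕ) (i : Fin n) : sgn r i = 1 ∨ sgn r i = -1 := by
  unfold sgn; split_ifs <;> simp

lemma sgn_sq {n : ℕ} (r : ℕ) (i : Fin n) : sgn r i * sgn r i = 1 := by
  rcases sgn_pm r i with h | h <;> rw [h] <;> norm_num

lemma abs_sgn {n : ℕ} (r : ℕ) (i : Fin n) : |sgn r i| = 1 := by
  rcases sgn_pm r i with h | h <;> rw [h] <;> norm_num

/-- The points of our construction. -/
def pt {n t : ℕ} (b : Fin t → Bool) (i : Fin n) : ℤ :=
  ∑ r : Fin t, if b r then 3 ^ (r : ℕ) * sgn (r : ℕ) i else 0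

lemma pm_eq {x y : ℤ} (hx : x = 1 ∨ x = -1) (hy : y = 1 ∨ y = -1)
    (h : 0 < x * y) : x = y := by
  rcases hx with h1 | h1 <;> rcases hy with h2 | h2 <;> subst h1 <;> subst h2 <;>
    first | rfl | norm_num at h

/-- Key sign lemma: if `a ≠ b`, then in every coordinate `i` the difference
`pt b i - pt a i` is nonzero and its sign is `(if b r then 1 else -1) * sgn r i`,
where `r` is the largest index at which `a` and `b` differ. -/
lemma key {n t : ℕ} (a b : Fin t → Bool) (hab : a ≠ b) :
    ∃ r : Fin t, a r ≠ b r ∧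
      ∀ i : Fin n, 0 < ((if b r then 1 else -1) * sgn (r : ℕ) i) * (pt b i - pt a i) := by
  classical
  have hne : (Finset.univ.filter (fun r : Fin t => a r ≠ b r)).Nonempty := by
    rcases Function.ne_iff.mp hab with ⟨r, hr⟩
    exact ⟨r, by simp [hr]⟩
  set D := Finset.univ.filter (fun r : Fin t => a r ≠ b r) with hD
  set r := D.max' hne with hrdef
  have hrD : r ∈ D := D.max'_mem hne
  have hrne : a r ≠ b r := by simpa [hD] using hrD
  refine ⟨r, hrne, ?_⟩
  intro i
  set e : ℤ := if b r then 1 else -1 with he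
  set B : Fin t → ℤ := fun r' => if b r' then 3 ^ (r' : ℕ) * sgn (r' : ℕ) i else 0 with hB
  set A : Fin t → ℤ := fun r' => if a r' then 3 ^ (r' : ℕ) * sgn (r' : ℕ) i else 0 with hA
  have hdiff : pt b i - pt a i = ∑ r' : Fin t, (B r' - A r') := by
    rw [Finset.sum_sub_distrib]; rfl
  have hzero : ∀ r' : Fin t, r < r' → B r' - A r' = 0 := by
    intro r' hlt
    have : r' ∉ D := fun hmem => absurd (D.le_max' r' hmem) (not_le.mpr hlt)
    have hab' : a r' = b r' := by simpa [hD] using this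
    simp [hB, hA, hab']
  have hsplit : ∑ r' : Fin t, (B r' - A r') =
      (B r - A r) + ∑ r' ∈ Finset.Iio r, (B r' - A r') := by
    rw [show (Finset.univ : Finset (Fin t)) = Finset.Iic r ∪ (Finset.univ.filter (r < ·)) from ?_]
    · rw [Finset.sum_union ?_]
      · rw [← Finset.Iio_insert, Finset.sum_insert (by simp)]
        have : ∑ r' ∈ Finset.univ.filter (r < ·), (B r' - A r') = 0 :=
          Finset.sum_eq_zero fun x hx => hzero x (by simpa using hx)
        rw [this, add_zero]
      · rw [Finset.disjoint_left]
        intro x hx hx'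
        simp only [Finset.mem_Iic] at hx
        simp only [Finset.mem_filter] at hx'
        exact absurd hx (not_le.mpr hx'.2)
    · ext x
      simp only [Finset.mem_univ, true_iff, Finset.mem_union, Finset.mem_Iic,
        Finset.mem_filter, true_and]
      exact le_or_gt x r
  have hterm : e * sgn (r : ℕ) i * (B r - A r) = 3 ^ (r : ℕ) := by
    have hsq := sgn_sq (n := n) (r : ℕ) i
    cases hb : b r <;> cases ha : a r
    · exact absurd (ha.trans hb.symm) hrne
    · simp only [hB, hA, he, hb, ha]
      norm_num
      linear_combination (3:ℤ) ^ (r : ℕ) * hsq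
    · simp only [hB, hA, he, hb, ha]
      norm_num
      linear_combination (3:ℤ) ^ (r : ℕ) * hsq
    · exact absurd (ha.trans hb.symm) hrne
  -- bound the tail
  have habs : ∀ r' : Fin t, |B r' - A r'| ≤ 3 ^ (r' : ℕ) := by
    intro r'
    have h3 : (0:ℤ) ≤ 3 ^ (r' : ℕ) := by positivity
    have habs3 : |(3:ℤ) ^ (r' : ℕ) * sgn (r' : ℕ) i| = 3 ^ (r' : ℕ) := by
      rw [abs_mul, abs_sgn, mul_one, abs_of_nonneg h3]
    rcases Bool.eq_false_or_eq_true (a r') with ha | ha <;>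
      rcases Bool.eq_false_or_eq_true (b r') with hb | hb <;>
      simp [hB, hA, ha, hb, h3, habs3, abs_neg]
  have htail : |∑ r' ∈ Finset.Iio r, (B r' - A r')| ≤ ∑ j ∈ Finset.range (r : ℕ), 3 ^ j := by
    refine (Finset.abs_sum_le_sum_abs _ _).trans ?_
    have hmap : ∑ r' ∈ Finset.Iio r, |B r' - A r'| ≤ ∑ r' ∈ Finset.Iio r, (3:ℤ) ^ (r' : ℕ) :=
      Finset.sum_le_sum fun x _ => habs x
    refine hmap.trans (le_of_eq ?_)
    rw [show Finset.range (r : ℕ) = Finset.Iio (r : ℕ) from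
      (Nat.Iio_eq_range (r : ℕ)).symm, ← Fin.map_valEmbedding_Iio,
      Finset.sum_map]
    rfl
  have hgeom : (2:ℤ) * ∑ j ∈ Finset.range (r : ℕ), 3 ^ j = 3 ^ (r : ℕ) - 1 := by
    have := geom_sum_mul (3:ℤ) (r : ℕ)
    linarith [this]
  have hEpm : e * sgn (r : ℕ) i = 1 ∨ e * sgn (r : ℕ) i = -1 := by
    rcases sgn_pm (n := n) (r : ℕ) i with h | h <;> rw [h] <;>
      rcases Bool.eq_false_or_eq_true (b r) with hb | hb <;> simp [he, hb]
  have hEtail : e * sgn (r : ℕ) i * ∑ r' ∈ Finset.Iio r, (B r' - A r') ≥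
      -(∑ j ∈ Finset.range (r : ℕ), 3 ^ j) := by
    have h1 : |e * sgn (r : ℕ) i * ∑ r' ∈ Finset.Iio r, (B r' - A r')| ≤
        ∑ j ∈ Finset.range (r : ℕ), 3 ^ j := by
      rw [abs_mul]
      rcases hEpm with h | h <;> rw [h] <;> simpa using htail
    linarith [neg_abs_le (e * sgn (r : ℕ) i * ∑ r' ∈ Finset.Iio r, (B r' - A r'))]
  have h3pos : (1:ℤ) ≤ 3 ^ (r : ℕ) := one_le_pow₀ (by norm_num)
  calc (0:ℤ) < 3 ^ (r : ℕ) - ∑ j ∈ Finset.range (r : ℕ), 3 ^ j := by linarith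
    _ ≤ e * sgn (r : ℕ) i * (pt b i - pt a i) := by
        rw [hdiff, hsplit, mul_add, hterm]; linarith

lemma sgn_inj {n t : ℕ} (hn : 0 < n) (ht : t ≤ n - 1) (r s : Fin (2 ^ t))
    (h : ∀ i : Fin n, sgn (r : ℕ) i = sgn (s : ℕ) i) : r = s := by
  apply Fin.ext
  apply Nat.eq_of_testBit_eq
  intro j
  by_cases hj : j < t
  · have hj' : j + 1 < n := by omega
    have hthis := h ⟨j + 1, hj'⟩
    simp only [sgn, Fin.val_mk, Nat.add_sub_cancel,
      if_neg (show ¬(j + 1 = 0) by omega)] at hthis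
    cases h1 : (r : ℕ).testBit j <;> cases h2 : (s : ℕ).testBit j <;>
      rw [h1, h2] at hthis <;> norm_num at hthis
  · have h2t : (2:ℕ) ^ t ≤ 2 ^ j := Nat.pow_le_pow_right (by norm_num) (by omega)
    rw [Nat.testBit_eq_false_of_lt (lt_of_lt_of_le r.isLt h2t),
      Nat.testBit_eq_false_of_lt (lt_of_lt_of_le s.isLt h2t)]

lemma abs_add_prod {A B : ℤ} (h : |A + B| = |A| + |B|) : 0 ≤ A * B := by
  rcases abs_cases A with ⟨h1, _⟩ | ⟨h1, _⟩ <;> rcases abs_cases B with ⟨h2, _⟩ | ⟨h2, _⟩ <;>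
    rcases abs_cases (A + B) with ⟨h3, _⟩ | ⟨h3, _⟩ <;> nlinarith

end GPaux

open GPaux in
/-- For every positive integer `n` there is a general position set in `ℤ^n`
with exactly `2^(2^(n-1))` elements. -/
theorem gp_lower_bound_of_integer_lattice (n : ℕ) (hn : 0 < n) :
    ∃ S : Set (Fin n → ℤ), S.encard = 2 ^ 2 ^ (n - 1) ∧
      ∀ u ∈ S, ∀ v ∈ S, ∀ w ∈ S, u ≠ v → u ≠ w → v ≠ w →
        d1 u w ≠ d1 u v + d1 v w := by
  classical
  set t := 2 ^ (n - 1) with ht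
  set i0 : Fin n := ⟨0, hn⟩ with hi0
  have hsgn0 : ∀ r : ℕ, sgn (n := n) r i0 = 1 := by intro r; simp [sgn, hi0]
  have hinj : Function.Injective (pt (n := n) (t := t)) := by
    intro a b h
    by_contra hab
    obtain ⟨r, _, hpos⟩ := key (n := n) a b hab
    have := hpos i0
    rw [h] at this
    simp at this
  refine ⟨Set.range (pt (n := n) (t := t)), ?_, ?_⟩
  · rw [← Set.image_univ, (Set.injOn_of_injective hinj).encard_image, Set.encard_univ,
      ENat.card_eq_coe_fintype_card, Fintype.card_fun, Fintype.card_bool, Fintype.card_fin]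
    push_cast
    rfl
  · rintro u ⟨a, rfl⟩ v ⟨b, rfl⟩ w ⟨c, rfl⟩ huv huw hvw heq
    have hab : a ≠ b := fun h => huv (by rw [h])
    have hbc : b ≠ c := fun h => hvw (by rw [h])
    -- coordinatewise equality
    have hsum : ∑ i : Fin n, (|pt a i - pt b i| + |pt b i - pt c i| - |pt a i - pt c i|) = 0 := by
      simp only [d1] at heq
      rw [Finset.sum_sub_distrib, Finset.sum_add_distrib]
      linarith
    have hcoord : ∀ i : Fin n,
        |pt a i - pt c i| = |pt a i - pt b i| + |pt b i - pt c i| := by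
      intro i
      have := (Finset.sum_eq_zero_iff_of_nonneg (fun i _ => by
        have := abs_sub_le (pt a i) (pt b i) (pt c i); linarith)).mp hsum i (Finset.mem_univ i)
      linarith
    have hprodnn : ∀ i : Fin n, 0 ≤ (pt b i - pt a i) * (pt c i - pt b i) := by
      intro i
      apply abs_add_prod
      have h2 : |pt b i - pt a i + (pt c i - pt b i)| = |pt a i - pt c i| := by
        rw [show pt b i - pt a i + (pt c i - pt b i) = -(pt a i - pt c i) by ring, abs_neg]
      have e1 := abs_sub_comm (pt a i) (pt b i)
      have e2 := abs_sub_comm (pt b i) (pt c i)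
      linarith [hcoord i, h2]
    obtain ⟨r, hr, hposr⟩ := key (n := n) a b hab
    obtain ⟨s, hs, hposs⟩ := key (n := n) b c hbc
    set e1 : ℤ := if b r then 1 else -1 with he1
    set e2 : ℤ := if c s then 1 else -1 with he2
    have he1pm : e1 = 1 ∨ e1 = -1 := by
      rcases Bool.eq_false_or_eq_true (b r) with h | h <;> simp [he1, h]
    have he2pm : e2 = 1 ∨ e2 = -1 := by
      rcases Bool.eq_false_or_eq_true (c s) with h | h <;> simp [he2, h]
    have hkey : ∀ i : Fin n, 0 < (e1 * sgn (r : ℕ) i) * (e2 * sgn (s : ℕ) i) := by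
      intro i
      have h1 := hposr i
      have h2 := hposs i
      have hXne : pt b i - pt a i ≠ 0 := by
        intro h; rw [h, mul_zero] at h1; exact lt_irrefl 0 h1
      have hYne : pt c i - pt b i ≠ 0 := by
        intro h; rw [h, mul_zero] at h2; exact lt_irrefl 0 h2
      have hXY : 0 < (pt b i - pt a i) * (pt c i - pt b i) :=
        lt_of_le_of_ne (hprodnn i) (Ne.symm (mul_ne_zero hXne hYne))
      nlinarith [mul_pos h1 h2]
    have he12 : e1 = e2 := by
      have := hkey i0
      rw [hsgn0, hsgn0, mul_one, mul_one] at this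
      exact pm_eq he1pm he2pm this
    have hsgneq : ∀ i : Fin n, sgn (n := n) (r : ℕ) i = sgn (s : ℕ) i := by
      intro i
      have h := hkey i
      rw [he12] at h
      apply pm_eq (sgn_pm _ _) (sgn_pm _ _)
      rcases he2pm with h2 | h2 <;> rw [h2] at h <;> nlinarith
    have hrs : r = s := sgn_inj hn (le_refl _) r s hsgneq
    rw [hrs] at hr he1
    -- now b s ≠ c s and a s ≠ b s, e1 = e2 gives a contradiction
    rw [he1, he2] at he12
    cases hb : b s <;> cases hc : c s <;> rw [hb, hc] at he12 hs <;>
      first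
        | exact hs rfl
        | norm_num at he12
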